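/- For every real a > 1, every integer m ≥ 1 and every x ≥ 0, R̂_{m,a}(e₁; x) = 1/(2m) + x·(log a)/((a^{1/m} − 1)·m), where e₁(t) = t. -/
import Mathlib


open Real MeasureTheory Filter

/-- The modified Szász–Mirakjan–Kantorovich operator of Mishra and Yadav. -/
noncomputable def szaszKant (a : ℝ) (m : ℕ) (f : ℝ → ℝ) (x : ℝ) : ℝ :=
  (m : ℝ) * ∑' k : ℕ,
    Real.exp (-(x * Real.log a / (a ^ ((1 : ℝ) / (m : ℝ)) - 1))) *
      (x * Real.log a / (a ^ ((1 : ℝ) / (m : ℝ)) - 1)) ^ k / (Nat.factorial k : ℝ) *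
      ∫ t in ((k : ℝ) / (m : ℝ))..(((k : ℝ) + 1) / (m : ℝ)), f t

/-- The `n`-th central moment of the operator. -/
noncomputable def szaszKantCM (a : ℝ) (m : ℕ) (n : ℕ) (x : ℝ) : ℝ :=
  szaszKant a m (fun t => (t - x) ^ n) x

lemma tsum_exp_aux (y : ℝ) : ∑' k : ℕ, y ^ k / (Nat.factorial k : ℝ) = Real.exp y := by
  rw [Real.exp_eq_exp_ℝ, NormedSpace.exp_eq_tsum_div]

lemma summable_mul_pow (y : ℝ) :
    Summable (fun k : ℕ => (k : ℝ) * y ^ k / (Nat.factorial k : ℝ)) := by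
  rw [← summable_nat_add_iff 1]
  have : (fun k : ℕ => ((k + 1 : ℕ) : ℝ) * y ^ (k + 1) / (Nat.factorial (k + 1) : ℝ))
      = fun k : ℕ => y * (y ^ k / (Nat.factorial k : ℝ)) := by
    funext k
    rw [Nat.factorial_succ]
    push_cast
    have h1 : ((k : ℝ) + 1) ≠ 0 := by positivity
    have h2 : (Nat.factorial k : ℝ) ≠ 0 := Nat.cast_ne_zero.mpr (Nat.factorial_ne_zero k)
    field_simp
    ring
  rw [this]
  exact (Real.summable_pow_div_factorial y).mul_left y

lemma tsum_mul_pow (y : ℝ) :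
    ∑' k : ℕ, (k : ℝ) * y ^ k / (Nat.factorial k : ℝ) = y * Real.exp y := by
  rw [Summable.tsum_eq_zero_add (summable_mul_pow y)]
  have : (fun k : ℕ => ((k + 1 : ℕ) : ℝ) * y ^ (k + 1) / (Nat.factorial (k + 1) : ℝ))
      = fun k : ℕ => y * (y ^ k / (Nat.factorial k : ℝ)) := by
    funext k
    rw [Nat.factorial_succ]
    push_cast
    have h2 : (Nat.factorial k : ℝ) ≠ 0 := Nat.cast_ne_zero.mpr (Nat.factorial_ne_zero k)
    field_simp
    ring
  rw [this, tsum_mul_left, tsum_exp_aux]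
  simp

theorem szaszKant_e1 (a : ℝ) (ha : 1 < a) (m : ℕ) (hm : 1 ≤ m)
    (x : ℝ) (hx : 0 ≤ x) :
    szaszKant a m (fun t => t) x =
      1 / (2 * (m : ℝ)) + x * Real.log a / ((a ^ ((1 : ℝ) / (m : ℝ)) - 1) * (m : ℝ)) := by
  have hm0 : (m : ℝ) ≠ 0 := by positivity
  set y : ℝ := x * Real.log a / (a ^ ((1 : ℝ) / (m : ℝ)) - 1) with hy
  unfold szaszKant
  have hterm : ∀ k : ℕ,
      Real.exp (-y) * y ^ k / (Nat.factorial k : ℝ) *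
        ∫ t in ((k : ℝ) / (m : ℝ))..(((k : ℝ) + 1) / (m : ℝ)), t
      = Real.exp (-y) / (2 * (m : ℝ) ^ 2) *
          (2 * ((k : ℝ) * y ^ k / (Nat.factorial k : ℝ)) + y ^ k / (Nat.factorial k : ℝ)) := by
    intro k
    rw [integral_id]
    have h2 : (Nat.factorial k : ℝ) ≠ 0 := Nat.cast_ne_zero.mpr (Nat.factorial_ne_zero k)
    field_simp
    ring
  rw [show (∑' k : ℕ,
      Real.exp (-y) * y ^ k / (Nat.factorial k : ℝ) *
        ∫ t in ((k : ℝ) / (m : ℝ))..(((k : ℝ) + 1) / (m : ℝ)), (fun t => t) t)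
    = ∑' k : ℕ, Real.exp (-y) / (2 * (m : ℝ) ^ 2) *
          (2 * ((k : ℝ) * y ^ k / (Nat.factorial k : ℝ)) + y ^ k / (Nat.factorial k : ℝ))
    from tsum_congr hterm]
  rw [tsum_mul_left, Summable.tsum_add (((summable_mul_pow y).mul_left 2))
    (Real.summable_pow_div_factorial y), tsum_mul_left, tsum_mul_pow, tsum_exp_aux,
    Real.exp_neg]
  have he : Real.exp y ≠ 0 := Real.exp_ne_zero y
  have ha1 : a ^ ((1 : ℝ) / (m : ℝ)) - 1 ≠ 0 := by
    have h1 : (1 : ℝ) < a ^ ((1 : ℝ) / (m : ℝ)) := by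
      exact Real.one_lt_rpow_iff_of_pos (by linarith) |>.mpr (Or.inl ⟨ha, by positivity⟩)
    exact sub_ne_zero.mpr (ne_of_gt h1)
  rw [hy]
  field_simp
  ring
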